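/- Let f, g : ℝ → ℝ be continuous, let a be a real number, and define recursively I₀(x) = ∫_a^x f(t) dt and I_k(x) = ∫_a^x g(s)·I_{k−1}(s) ds for k ≥ 1. Then for every nonnegative integer n and every real x, the n-fold iterated integral satisfies I_n(x) = (1/n!) · ∫_a^x f(t) · (∫_t^x g(y) dy)^n dt. -/

import Mathlib

open intervalIntegral Finset MeasureTheory

namespace Stmt6Aux

variable {f g : ℝ → ℝ} {a : ℝ}

noncomputable def G (g : ℝ → ℝ) (a x : ℝ) : ℝ := ∫ y in a..x, g y

noncomputable def A (f g : ℝ → ℝ) (a : ℝ) (j : ℕ) (x : ℝ) : ℝ :=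
  ∫ t in a..x, f t * (G g a t) ^ j

noncomputable def S (f g : ℝ → ℝ) (a : ℝ) (m : ℕ) (x : ℝ) : ℝ :=
  ∑ k ∈ range (m + 1),
    ((-1 : ℝ) ^ (k + m) * (m.choose k : ℝ)) * ((G g a x) ^ k * A f g a (m - k) x)

lemma G_cont (hg : Continuous g) : Continuous (G g a) :=
  continuous_primitive (fun b c => hg.intervalIntegrable b c) a

lemma G_deriv (hg : Continuous g) (x : ℝ) : HasDerivAt (G g a) (g x) x :=
  integral_hasDerivAt_right (hg.intervalIntegrable a x)
    hg.aestronglyMeasurable.stronglyMeasurableAtFilter hg.continuousAt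

lemma AI_cont (hf : Continuous f) (hg : Continuous g) (j : ℕ) :
    Continuous (fun t => f t * (G g a t) ^ j) :=
  hf.mul ((G_cont hg).pow j)

lemma A_cont (hf : Continuous f) (hg : Continuous g) (j : ℕ) : Continuous (A f g a j) :=
  continuous_primitive (fun b c => (AI_cont hf hg j).intervalIntegrable b c) a

lemma A_deriv (hf : Continuous f) (hg : Continuous g) (j : ℕ) (x : ℝ) :
    HasDerivAt (A f g a j) (f x * (G g a x) ^ j) x :=
  integral_hasDerivAt_right ((AI_cont hf hg j).intervalIntegrable a x)
    (AI_cont hf hg j).aestronglyMeasurable.stronglyMeasurableAtFilter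
    (AI_cont hf hg j).continuousAt

lemma S_cont (hf : Continuous f) (hg : Continuous g) (m : ℕ) : Continuous (S f g a m) := by
  unfold S
  exact continuous_finset_sum _ fun k _ =>
    continuous_const.mul (((G_cont hg).pow k).mul (A_cont hf hg (m - k)))

lemma S_at_a (m : ℕ) : S f g a m a = 0 := by
  unfold S A
  simp [integral_same]

lemma expand (hf : Continuous f) (hg : Continuous g) (m : ℕ) (x : ℝ) :
    (∫ t in a..x, f t * (G g a x - G g a t) ^ m) = S f g a m x := by
  have h1 : ∀ t : ℝ, f t * (G g a x - G g a t) ^ m =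
      ∑ k ∈ range (m + 1),
        ((-1 : ℝ) ^ (k + m) * (m.choose k : ℝ)) * ((G g a x) ^ k * (f t * (G g a t) ^ (m - k))) := by
    intro t
    rw [sub_pow, Finset.mul_sum]
    exact Finset.sum_congr rfl fun k _ => by ring
  simp_rw [h1]
  rw [intervalIntegral.integral_finset_sum]
  · unfold S A
    refine Finset.sum_congr rfl fun k _ => ?_
    rw [intervalIntegral.integral_const_mul, intervalIntegral.integral_const_mul]
  · intro k _
    exact (continuous_const.mul (continuous_const.mul
      (hf.mul ((G_cont hg).pow (m - k))))).intervalIntegrable a x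

lemma S_deriv (hf : Continuous f) (hg : Continuous g) (n : ℕ) (x : ℝ) :
    HasDerivAt (S f g a (n + 1)) (((n : ℝ) + 1) * g x * S f g a n x) x := by
  have hterm : ∀ k ∈ range (n + 2),
      HasDerivAt (fun y => ((-1 : ℝ) ^ (k + (n + 1)) * ((n + 1).choose k : ℝ)) *
          ((G g a y) ^ k * A f g a (n + 1 - k) y))
        (((-1 : ℝ) ^ (k + (n + 1)) * ((n + 1).choose k : ℝ)) *
          (((k : ℝ) * (G g a x) ^ (k - 1) * g x) * A f g a (n + 1 - k) x +
            (G g a x) ^ k * (f x * (G g a x) ^ (n + 1 - k)))) x := by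
    intro k _
    exact ((((G_deriv hg x).pow k).mul (A_deriv hf hg (n + 1 - k) x))).const_mul _
  have hsum := HasDerivAt.fun_sum hterm
  refine HasDerivAt.congr_deriv hsum ?_
  have split : (∑ k ∈ range (n + 2),
      ((-1 : ℝ) ^ (k + (n + 1)) * ((n + 1).choose k : ℝ)) *
        (((k : ℝ) * (G g a x) ^ (k - 1) * g x) * A f g a (n + 1 - k) x +
          (G g a x) ^ k * (f x * (G g a x) ^ (n + 1 - k)))) =
      (∑ k ∈ range (n + 2), ((-1 : ℝ) ^ (k + (n + 1)) * ((n + 1).choose k : ℝ)) *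
        (((k : ℝ) * (G g a x) ^ (k - 1) * g x) * A f g a (n + 1 - k) x)) +
      (∑ k ∈ range (n + 2), ((-1 : ℝ) ^ (k + (n + 1)) * ((n + 1).choose k : ℝ)) *
        ((G g a x) ^ k * (f x * (G g a x) ^ (n + 1 - k)))) := by
    rw [← Finset.sum_add_distrib]
    exact Finset.sum_congr rfl fun k _ => by ring
  rw [split]
  have hv : (∑ k ∈ range (n + 2), ((-1 : ℝ) ^ (k + (n + 1)) * ((n + 1).choose k : ℝ)) *
      ((G g a x) ^ k * (f x * (G g a x) ^ (n + 1 - k)))) = 0 := by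
    have : (∑ k ∈ range (n + 2), ((-1 : ℝ) ^ (k + (n + 1)) * ((n + 1).choose k : ℝ)) *
        ((G g a x) ^ k * (f x * (G g a x) ^ (n + 1 - k)))) =
        f x * (G g a x - G g a x) ^ (n + 1) := by
      rw [sub_pow, Finset.mul_sum]
      exact Finset.sum_congr rfl fun k _ => by ring
    rw [this, sub_self, zero_pow (Nat.succ_ne_zero n), mul_zero]
  rw [hv, add_zero]
  rw [Finset.sum_range_succ']
  have h0 : ((-1 : ℝ) ^ (0 + (n + 1)) * ((n + 1).choose 0 : ℝ)) *
      (((0 : ℕ) : ℝ) * (G g a x) ^ (0 - 1) * g x * A f g a (n + 1 - 0) x) = 0 := by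
    simp
  rw [h0, add_zero]
  unfold S
  rw [Finset.mul_sum]
  refine (Finset.sum_congr rfl fun j hj => ?_).symm
  have hc : ((n : ℝ) + 1) * (n.choose j : ℝ) = (((n + 1).choose (j + 1) : ℕ) : ℝ) * ((j : ℝ) + 1) := by
    exact_mod_cast congrArg (fun m : ℕ => (m : ℝ)) (Nat.add_one_mul_choose_eq n j)
  have hs : (-1 : ℝ) ^ ((j + 1) + (n + 1)) = (-1 : ℝ) ^ (j + n) := by
    rw [show (j + 1) + (n + 1) = (j + n) + 2 by omega, pow_add]
    norm_num
  simp only [Nat.sub_zero, Nat.succ_sub_succ]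
  rw [hs]
  push_cast
  linear_combination ((-1 : ℝ) ^ (j + n) * (G g a x) ^ j * g x * A f g a (n - j) x) * hc

lemma key (hf : Continuous f) (hg : Continuous g) (n : ℕ) (x : ℝ) :
    (∫ s in a..x, g s * ((1 / (n.factorial : ℝ)) * S f g a n s)) =
      (1 / ((n + 1).factorial : ℝ)) * S f g a (n + 1) x := by
  set D : ℝ → ℝ := fun y => (1 / ((n + 1).factorial : ℝ)) * S f g a (n + 1) y -
      ∫ s in a..y, g s * ((1 / (n.factorial : ℝ)) * S f g a n s) with hD
  have hint : Continuous fun s => g s * ((1 / (n.factorial : ℝ)) * S f g a n s) :=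
    hg.mul (continuous_const.mul (S_cont hf hg n))
  have hDder : ∀ y, HasDerivAt D 0 y := by
    intro y
    have h1 := (S_deriv (a := a) hf hg n y).const_mul (1 / (((n + 1).factorial : ℕ) : ℝ))
    have h2 : HasDerivAt (fun u => ∫ s in a..u, g s * ((1 / (n.factorial : ℝ)) * S f g a n s))
        (g y * ((1 / (n.factorial : ℝ)) * S f g a n y)) y :=
      integral_hasDerivAt_right (hint.intervalIntegrable a y)
        hint.aestronglyMeasurable.stronglyMeasurableAtFilter hint.continuousAt
    have h3 := h1.fun_sub h2
    refine HasDerivAt.congr_deriv h3 ?_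
    have hfac : (((n + 1).factorial : ℕ) : ℝ) = ((n : ℝ) + 1) * (n.factorial : ℝ) := by
      rw [Nat.factorial_succ]; push_cast; ring
    rw [hfac]
    have h0 : ((n : ℝ) + 1) ≠ 0 := by positivity
    have h0' : (n.factorial : ℝ) ≠ 0 := Nat.cast_ne_zero.2 n.factorial_ne_zero
    field_simp
    ring
  have hconst : D x = D a := is_const_of_deriv_eq_zero
    (fun y => (hDder y).differentiableAt) (fun y => (hDder y).deriv) x a
  have hDa : D a = 0 := by simp [hD, S_at_a, integral_same]
  have := hconst.trans hDa
  rw [hD] at this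
  linarith [this]

lemma integral_eq (hg : Continuous g) (t x : ℝ) :
    (∫ y in t..x, g y) = G g a x - G g a t :=
  (integral_interval_sub_left (hg.intervalIntegrable a x) (hg.intervalIntegrable a t)).symm

lemma inner_eq (hf : Continuous f) (hg : Continuous g) (n : ℕ) (x : ℝ) :
    (∫ t in a..x, f t * (∫ y in t..x, g y) ^ n) = S f g a n x := by
  simp_rw [integral_eq (a := a) hg]
  exact expand hf hg n x

end Stmt6Aux

theorem stmt6 (f g : ℝ → ℝ) (hf : Continuous f) (hg : Continuous g) (a : ℝ)
    (I : ℕ → ℝ → ℝ)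
    (hI0 : ∀ x : ℝ, I 0 x = ∫ t in a..x, f t)
    (hIk : ∀ (k : ℕ) (x : ℝ), I (k + 1) x = ∫ s in a..x, g s * I k s) :
    ∀ (n : ℕ) (x : ℝ),
      I n x = (1 / (n.factorial : ℝ)) * ∫ t in a..x, f t * (∫ y in t..x, g y) ^ n := by
  intro n
  induction n with
  | zero => intro x; simp [hI0 x]
  | succ n ih =>
    intro x
    have hinner : ∀ s : ℝ, I n s = (1 / (n.factorial : ℝ)) * Stmt6Aux.S f g a n s := by
      intro s
      rw [ih s, Stmt6Aux.inner_eq hf hg n s]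
    rw [hIk n x]
    simp_rw [hinner]
    rw [Stmt6Aux.key hf hg n x, ← Stmt6Aux.inner_eq hf hg (n + 1) x]
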